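/- In the two-sub-property curve setting with contour family, assume R : ℝ → ℝ is differentiable and strictly monotone, and assume that either R'(x) ≥ T'(t(x, R(x)), x) for all x ∈ ℝ, or R'(x) ≤ T'(t(x, R(x)), x) for all x ∈ ℝ. Then for every (r̂_1, r̂_2) ∈ ℝ², every pair of sub-losses L_1, L_2 accuracy-rewarding with respect to r̂_1 and r̂_2, and every fixed c_2 > 0, the map c_1 ↦ t(x*_{(c_1, c_2)}, R(x*_{(c_1, c_2)})) is monotone (nondecreasing or nonincreasing) on [0, ∞). -/

import Mathlib

/-- A loss `L : ℝ → ℝ` is accuracy-rewarding with respect to a value `r̂` if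
`L r > L r'` whenever `r < r' ≤ r̂` or `r̂ ≤ r' < r`. -/
def AccuracyRewarding (L : ℝ → ℝ) (rhat : ℝ) : Prop :=
  ∀ x y : ℝ, ((x < y ∧ y ≤ rhat) ∨ (rhat ≤ y ∧ y < x)) → L y < L x

lemma ar_neg {f : ℝ → ℝ} {m : ℝ}
    (h : AccuracyRewarding (fun x => f (-x)) (-m)) : AccuracyRewarding f m := by
  intro x y hxy
  have := h (-x) (-y) (by
    rcases hxy with ⟨h1, h2⟩ | ⟨h1, h2⟩
    · exact Or.inr ⟨neg_le_neg h2, neg_lt_neg h1⟩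
    · exact Or.inl ⟨neg_lt_neg h2, neg_le_neg h1⟩)
  simpa using this

lemma ar_comp_mono {L R : ℝ → ℝ} {rh m : ℝ}
    (hL : AccuracyRewarding L rh) (hR : StrictMono R)
    (hm : ∀ y, L (R m) ≤ L (R y)) : AccuracyRewarding (fun x => L (R x)) m := by
  intro x y hxy
  rcases hxy with ⟨hxy, hym⟩ | ⟨hmy, hyx⟩
  · -- x < y ≤ m : show L (R y) < L (R x)
    rcases le_or_gt (R y) rh with h1 | h1
    · exact hL (R x) (R y) (Or.inl ⟨hR hxy, h1⟩)
    · rcases eq_or_lt_of_le hym with rfl | hym'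
      · obtain ⟨z, hz1, hz2⟩ := exists_between hxy
        rcases le_or_gt (R z) rh with h2 | h2
        · exact lt_of_le_of_lt (hm z) (hL (R x) (R z) (Or.inl ⟨hR hz1, h2⟩))
        · exact absurd (hL (R y) (R z) (Or.inr ⟨h2.le, hR hz2⟩)) (not_lt.2 (hm z))
      · exact absurd (hL (R m) (R y) (Or.inr ⟨h1.le, hR hym'⟩)) (not_lt.2 (hm y))
  · -- m ≤ y < x : show L (R y) < L (R x)
    rcases le_or_gt rh (R y) with h1 | h1
    · exact hL (R x) (R y) (Or.inr ⟨h1, hR hyx⟩)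
    · rcases eq_or_lt_of_le hmy with rfl | hmy'
      · obtain ⟨z, hz1, hz2⟩ := exists_between hyx
        rcases le_or_gt rh (R z) with h2 | h2
        · exact lt_of_le_of_lt (hm z) (hL (R x) (R z) (Or.inr ⟨h2, hR hz2⟩))
        · exact absurd (hL (R m) (R z) (Or.inl ⟨hR hz1, h2.le⟩)) (not_lt.2 (hm z))
      · exact absurd (hL (R m) (R y) (Or.inl ⟨hR hmy', h1.le⟩)) (not_lt.2 (hm y))

lemma ar_comp {L R : ℝ → ℝ} {rh m : ℝ}
    (hL : AccuracyRewarding L rh) (hR : StrictMono R ∨ StrictAnti R)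
    (hm : ∀ y, L (R m) ≤ L (R y)) : AccuracyRewarding (fun x => L (R x)) m := by
  rcases hR with hR | hR
  · exact ar_comp_mono hL hR hm
  · apply ar_neg (f := fun x => L (R x))
    have : StrictMono (fun x => R (-x)) := fun a b hab => hR (neg_lt_neg hab)
    have h2 := ar_comp_mono (R := fun x => R (-x)) (m := -m) hL this
      (by intro y; simpa using hm (-y))
    exact h2

/-- Preliminary monotonicity conclusion in the paper's Theorem 4: the optimal parametric
estimate of the target property is monotone in each weight. -/
theorem target_estimate_monotone_in_weight
    (t : ℝ → ℝ → ℝ)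
    (htc : Continuous fun p : ℝ × ℝ => t p.1 p.2)
    (htd : Differentiable ℝ fun p : ℝ × ℝ => t p.1 p.2)
    (hty : ∀ x y : ℝ, deriv (fun y' => t x y') y ≠ 0)
    (T : ℝ → ℝ → ℝ)
    (hTd : ∀ t₀ : ℝ, Differentiable ℝ (T t₀))
    (hTm : ∀ t₀ : ℝ, Monotone (T t₀) ∨ Antitone (T t₀))
    (hTlevel : ∀ t₀ x : ℝ, t x (T t₀ x) = t₀)
    (hTinv : ∀ x y : ℝ, T (t x y) x = y)
    (R : ℝ → ℝ) (hRd : Differentiable ℝ R) (hRmono : StrictMono R ∨ StrictAnti R)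
    (hsign : (∀ x : ℝ, deriv (T (t x (R x))) x ≤ deriv R x) ∨
      (∀ x : ℝ, deriv R x ≤ deriv (T (t x (R x))) x))
    (rhat₁ rhat₂ : ℝ) (L₁ L₂ : ℝ → ℝ)
    (hL₁ : AccuracyRewarding L₁ rhat₁) (hL₂ : AccuracyRewarding L₂ rhat₂)
    (c₂ : ℝ) (hc₂ : 0 < c₂)
    (xstar : ℝ → ℝ)
    (hmin : ∀ c₁ : ℝ, 0 ≤ c₁ →
      ∀ y : ℝ, c₁ * L₁ (xstar c₁) + c₂ * L₂ (R (xstar c₁)) ≤ c₁ * L₁ y + c₂ * L₂ (R y)) :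
    MonotoneOn (fun c₁ => t (xstar c₁) (R (xstar c₁))) (Set.Ici 0) ∨
      AntitoneOn (fun c₁ => t (xstar c₁) (R (xstar c₁))) (Set.Ici 0) := by
  -- Step 1: `L₂ ∘ R` is accuracy-rewarding w.r.t. `m := xstar 0`.
  set m := xstar 0 with hm_def
  have hmin0 : ∀ y, L₂ (R m) ≤ L₂ (R y) := by
    intro y
    have := hmin 0 le_rfl y
    rw [zero_mul, zero_mul, zero_add, zero_add] at this
    exact le_of_mul_le_mul_left this hc₂
  have hAR2 : AccuracyRewarding (fun x => L₂ (R x)) m := ar_comp hL₂ hRmono hmin0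
  -- Step 2: all minimizers lie between `rhat₁` and `m`.
  have hbound : ∀ c₁, 0 ≤ c₁ →
      min rhat₁ m ≤ xstar c₁ ∧ xstar c₁ ≤ max rhat₁ m := by
    intro c₁ hc₁
    constructor
    · by_contra hcon
      push_neg at hcon
      have h1 : L₁ (min rhat₁ m) < L₁ (xstar c₁) :=
        hL₁ _ _ (Or.inl ⟨hcon, min_le_left _ _⟩)
      have h2 : L₂ (R (min rhat₁ m)) < L₂ (R (xstar c₁)) :=
        hAR2 _ _ (Or.inl ⟨hcon, min_le_right _ _⟩)
      have h3 := hmin c₁ hc₁ (min rhat₁ m)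
      have h4 := mul_le_mul_of_nonneg_left h1.le hc₁
      have h5 := mul_lt_mul_of_pos_left h2 hc₂
      linarith
    · by_contra hcon
      push_neg at hcon
      have h1 : L₁ (max rhat₁ m) < L₁ (xstar c₁) :=
        hL₁ _ _ (Or.inr ⟨le_max_left _ _, hcon⟩)
      have h2 : L₂ (R (max rhat₁ m)) < L₂ (R (xstar c₁)) :=
        hAR2 _ _ (Or.inr ⟨le_max_right _ _, hcon⟩)
      have h3 := hmin c₁ hc₁ (max rhat₁ m)
      have h4 := mul_le_mul_of_nonneg_left h1.le hc₁
      have h5 := mul_lt_mul_of_pos_left h2 hc₂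
      linarith
  -- Step 3: `L₁ (xstar ·)` is nonincreasing in the weight.
  have hL1ord : ∀ a b, 0 ≤ a → a < b → L₁ (xstar b) ≤ L₁ (xstar a) := by
    intro a b ha hab
    by_contra hcon
    push_neg at hcon
    have h1 := hmin a ha (xstar b)
    have h2 := hmin b (ha.trans hab.le) (xstar a)
    have h3 := mul_lt_mul_of_pos_left hcon (sub_pos.2 hab)
    nlinarith
  -- Step 4: `xstar` is monotone on `[0, ∞)`.
  have hxmono : MonotoneOn xstar (Set.Ici 0) ∨ AntitoneOn xstar (Set.Ici 0) := by
    rcases le_total rhat₁ m with hcase | hcase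
    · right
      intro a ha b hb hab
      rcases eq_or_lt_of_le hab with rfl | hab'
      · exact le_rfl
      by_contra hcon
      push_neg at hcon
      have h1 : rhat₁ ≤ xstar a := by
        have := (hbound a ha).1
        rwa [min_eq_left hcase] at this
      have := hL₁ (xstar b) (xstar a) (Or.inr ⟨h1, hcon⟩)
      exact absurd (hL1ord a b ha hab') (not_le.2 this)
    · left
      intro a ha b hb hab
      rcases eq_or_lt_of_le hab with rfl | hab'
      · exact le_rfl
      by_contra hcon
      push_neg at hcon
      have h1 : xstar a ≤ rhat₁ := by
        have := (hbound a ha).2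
        rwa [max_eq_left hcase] at this
      have := hL₁ (xstar b) (xstar a) (Or.inl ⟨hcon, h1⟩)
      exact absurd (hL1ord a b ha hab') (not_le.2 this)
  -- Step 5: derivative identity for the curve value `φ x = t x (R x)`.
  have hdiffcurve : ∀ x : ℝ, HasDerivAt (fun z => t z (R z))
      ((deriv R x - deriv (T (t x (R x))) x) * deriv (fun y => t x y) (R x)) x := by
    intro x
    set t₀ := t x (R x) with ht₀
    have hf : HasFDerivAt (fun p : ℝ × ℝ => t p.1 p.2)
        (fderiv ℝ (fun p : ℝ × ℝ => t p.1 p.2) (x, R x)) (x, R x) := (htd (x, R x)).hasFDerivAt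
    set F := fderiv ℝ (fun p : ℝ × ℝ => t p.1 p.2) (x, R x) with hF
    have hc1 : HasDerivAt (fun z : ℝ => (z, R z)) ((1 : ℝ), deriv R x) x :=
      HasDerivAt.prodMk (hasDerivAt_id x) (hRd x).hasDerivAt
    have hφ : HasDerivAt (fun z => t z (R z)) (F (1, deriv R x)) x :=
      by exact hf.comp_hasDerivAt x hc1
    have hc2 : HasDerivAt (fun z : ℝ => (z, T t₀ z)) ((1 : ℝ), deriv (T t₀) x) x :=
      HasDerivAt.prodMk (hasDerivAt_id x) (hTd t₀ x).hasDerivAt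
    have hpt : ((x : ℝ), T t₀ x) = ((x : ℝ), R x) := by
      rw [ht₀, hTinv]
    have hψ : HasDerivAt (fun z => t z (T t₀ z)) (F (1, deriv (T t₀) x)) x := by
      have hf2 : HasFDerivAt (fun p : ℝ × ℝ => t p.1 p.2) F ((x : ℝ), T t₀ x) := by
        rw [hpt]; exact hf
      exact hf2.comp_hasDerivAt x hc2
    have hconst : (fun z => t z (T t₀ z)) = fun _ : ℝ => t₀ := funext fun z => hTlevel t₀ z
    have hzero : F (1, deriv (T t₀) x) = 0 := by
      rw [hconst] at hψ
      exact hψ.unique (hasDerivAt_const x t₀)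
    have hd : HasDerivAt (fun y => t x y) (F (0, 1)) (R x) := by
      have hc3 : HasDerivAt (fun y : ℝ => ((x : ℝ), y)) ((0 : ℝ), (1 : ℝ)) (R x) :=
        HasDerivAt.prodMk (hasDerivAt_const (R x) x) (hasDerivAt_id (R x))
      exact hf.comp_hasDerivAt (R x) hc3
    have hder : deriv (fun y => t x y) (R x) = F (0, 1) := hd.deriv
    have hsplit : ((1 : ℝ), deriv R x) =
        ((1 : ℝ), deriv (T t₀) x) + (deriv R x - deriv (T t₀) x) • ((0 : ℝ), (1 : ℝ)) := by
      apply Prod.ext <;> simp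
    have hkey : F (1, deriv R x) = (deriv R x - deriv (T t₀) x) * F (0, 1) := by
      rw [hsplit, map_add, map_smul, hzero, zero_add, smul_eq_mul]
    rw [hder, ← hkey]
    exact hφ
  -- Step 6: the vertical derivative of `t` has a uniform sign.
  have hper : ∀ x : ℝ, (∀ y, 0 < deriv (fun y' => t x y') y) ∨
      (∀ y, deriv (fun y' => t x y') y < 0) := by
    intro x
    have hdx : Differentiable ℝ (fun y => t x y) :=
      htd.comp ((differentiable_const x).prodMk differentiable_id)
    have := hasDerivWithinAt_forall_lt_or_forall_gt_of_forall_ne (convex_univ (𝕜 := ℝ))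
      (f := fun y => t x y) (f' := fun y => deriv (fun y' => t x y') y)
      (fun y _ => ((hdx y).hasDerivAt).hasDerivWithinAt) (m := 0)
      (fun y _ => hty x y)
    rcases this with h | h
    · exact Or.inr fun y => h y (Set.mem_univ y)
    · exact Or.inl fun y => h y (Set.mem_univ y)
  have huni : (∀ x y : ℝ, 0 < deriv (fun y' => t x y') y) ∨
      (∀ x y : ℝ, deriv (fun y' => t x y') y < 0) := by
    by_cases hall : ∀ x y : ℝ, 0 < deriv (fun y' => t x y') y
    · exact Or.inl hall
    · right
      push_neg at hall
      obtain ⟨x₁, y₁, hx₁⟩ := hall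
      have hN1 : ∀ y, deriv (fun y' => t x₁ y') y < 0 :=
        (hper x₁).resolve_left fun h => absurd (h y₁) (not_lt.2 hx₁)
      intro x y
      by_contra hcon
      push_neg at hcon
      have hP : ∀ y, 0 < deriv (fun y' => t x y') y :=
        (hper x).resolve_right fun h => absurd (h y) (not_lt.2 hcon)
      have hMx : StrictMono (fun y => t x y) := strictMono_of_deriv_pos hP
      have hAx : StrictAnti (fun y => t x₁ y) := strictAnti_of_deriv_neg hN1
      have hg : Continuous (fun s : ℝ => t s 1 - t s 0) :=
        (htc.comp (continuous_id.prodMk continuous_const)).sub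
          (htc.comp (continuous_id.prodMk continuous_const))
      have hgx : 0 < t x 1 - t x 0 := sub_pos.2 (hMx zero_lt_one)
      have hgx₁ : t x₁ 1 - t x₁ 0 < 0 := sub_neg.2 (hAx zero_lt_one)
      obtain ⟨x₂, hx₂⟩ : ∃ s : ℝ, t s 1 - t s 0 = 0 := by
        rcases le_total x x₁ with hle | hle
        · obtain ⟨s, _, hs⟩ := intermediate_value_Icc' hle hg.continuousOn
            (Set.mem_Icc.2 ⟨hgx₁.le, hgx.le⟩)
          exact ⟨s, hs⟩
        · obtain ⟨s, _, hs⟩ := intermediate_value_Icc hle hg.continuousOn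
            (Set.mem_Icc.2 ⟨hgx₁.le, hgx.le⟩)
          exact ⟨s, hs⟩
      have heq : t x₂ 0 = t x₂ 1 := by linarith
      have : (0 : ℝ) = 1 := by
        calc (0 : ℝ) = T (t x₂ 0) x₂ := (hTinv x₂ 0).symm
          _ = T (t x₂ 1) x₂ := by rw [heq]
          _ = 1 := hTinv x₂ 1
      norm_num at this
  -- Step 7: `φ` is monotone or antitone.
  have hφdiff : Differentiable ℝ (fun z => t z (R z)) := fun x =>
    (hdiffcurve x).differentiableAt
  have hφderiv : ∀ x, deriv (fun z => t z (R z)) x =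
      (deriv R x - deriv (T (t x (R x))) x) * deriv (fun y => t x y) (R x) := fun x =>
    (hdiffcurve x).deriv
  have hφmono : Monotone (fun z => t z (R z)) ∨ Antitone (fun z => t z (R z)) := by
    rcases hsign with hs | hs <;> rcases huni with hu | hu
    · left
      refine monotone_of_deriv_nonneg hφdiff fun x => ?_
      rw [hφderiv]
      exact mul_nonneg (sub_nonneg.2 (hs x)) (hu x (R x)).le
    · right
      refine antitone_of_deriv_nonpos hφdiff fun x => ?_
      rw [hφderiv]
      exact mul_nonpos_iff.2 (Or.inl ⟨sub_nonneg.2 (hs x), (hu x (R x)).le⟩)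
    · right
      refine antitone_of_deriv_nonpos hφdiff fun x => ?_
      rw [hφderiv]
      exact mul_nonpos_iff.2 (Or.inr ⟨sub_nonpos.2 (hs x), (hu x (R x)).le⟩)
    · left
      refine monotone_of_deriv_nonneg hφdiff fun x => ?_
      rw [hφderiv]
      have h1 := sub_nonpos.2 (hs x)
      have h2 := (hu x (R x)).le
      nlinarith
  -- Step 8: conclude by composing.
  rcases hφmono with hm | hm <;> rcases hxmono with hx | hx
  · exact Or.inl (hm.comp_monotoneOn hx)
  · exact Or.inr (hm.comp_antitoneOn hx)
  · exact Or.inr (hm.comp_monotoneOn hx)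
  · exact Or.inl (hm.comp_antitoneOn hx)
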